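/- Let G be a graph with a 2-colouring of its edges in which every monochromatic component has diameter at most D. Then there is a covering set for G of at most α(G) monochromatic subgraphs each of diameter at most D. -/

import Mathlib

open Finset

/-- The monochromatic component of `w` in colour `R`, as a subgraph of `G`. -/
def compSub {V : Type*} (G R : SimpleGraph V) (hRG : R ≤ G) (w : V) : G.Subgraph where
  verts := {v | R.Reachable w v}
  Adj u v := R.Adj u v ∧ R.Reachable w u
  adj_sub h := hRG h.1
  edge_vert h := h.2
  symm := ⟨fun u v h => ⟨h.1.symm, h.2.trans h.1.reachable⟩⟩

lemma compSub_spanningCoe_le {V : Type*} (G R : SimpleGraph V) (hRG : R ≤ G) (w : V) :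
    (compSub G R hRG w).spanningCoe ≤ R := by
  intro u v h
  exact h.1

lemma compSub_walk {V : Type*} (G R : SimpleGraph V) (hRG : R ≤ G) (w : V) :
    ∀ {u v : V} (p : R.Walk u v) (hu : R.Reachable w u),
    ∃ q : (compSub G R hRG w).coe.Walk ⟨u, hu⟩ ⟨v, hu.trans p.reachable⟩,
      q.length = p.length := by
  intro u v p
  induction p with
  | nil => intro hu; exact ⟨.nil, rfl⟩
  | @cons a b c h p ih =>
    intro hu
    obtain ⟨q, hq⟩ := ih (hu.trans h.reachable)
    exact ⟨.cons ⟨h, hu⟩ q, congrArg (· + 1) hq⟩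

lemma compSub_edist_le {V : Type*} (G R : SimpleGraph V) (hRG : R ≤ G) (w : V) {D : ℕ}
    (hD : ∀ u v : V, R.Reachable u v → R.edist u v ≤ D)
    (u v : (compSub G R hRG w).verts) :
    (compSub G R hRG w).coe.edist u v ≤ (D : ℕ∞) := by
  have hu : R.Reachable w u.1 := u.2
  have hv : R.Reachable w v.1 := v.2
  have hr : R.Reachable u.1 v.1 := hu.symm.trans hv
  obtain ⟨p, hp⟩ := hr.exists_walk_length_eq_edist
  obtain ⟨q, hq⟩ := compSub_walk G R hRG w p hu
  calc (compSub G R hRG w).coe.edist u v ≤ q.length := SimpleGraph.edist_le q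
    _ = (p.length : ℕ∞) := by exact_mod_cast hq
    _ = R.edist u.1 v.1 := hp
    _ ≤ (D : ℕ∞) := hD _ _ hr

/-- If every monochromatic component of an edge 2-coloured graph has diameter at most
`D`, then there is a covering set of at most `α(G)` monochromatic subgraphs, each of
diameter at most `D`. -/
theorem cover_when_components_bounded {V : Type*} [Fintype V]
    (G red blue : SimpleGraph V) (hcol : red ⊔ blue = G) (D : ℕ)
    (hred : ∀ u v : V, red.Reachable u v → red.edist u v ≤ D)
    (hblue : ∀ u v : V, blue.Reachable u v → blue.edist u v ≤ D)
    (α : ℕ)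
    (hα : IsGreatest {n : ℕ | ∃ s : Finset V,
      s.card = n ∧ ∀ u ∈ s, ∀ v ∈ s, u ≠ v → ¬ G.Adj u v} α) :
    ∃ 𝒞 : Finset G.Subgraph,
      𝒞.card ≤ α ∧
      (∀ H ∈ 𝒞, H.spanningCoe ≤ red ∨ H.spanningCoe ≤ blue) ∧
      (∀ H ∈ 𝒞, ∀ u v : H.verts, H.coe.edist u v ≤ (D : ℕ∞)) ∧
      (∀ v : V, ∃ H ∈ 𝒞, v ∈ H.verts) := by
  classical
  rcases isEmpty_or_nonempty V with hV | hV
  · exact ⟨∅, by simp, by simp, by simp, fun v => (IsEmpty.false v).elim⟩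
  have hRG : red ≤ G := hcol ▸ le_sup_left
  have hBG : blue ≤ G := hcol ▸ le_sup_right
  have hGadj : ∀ u v : V, G.Adj u v → red.Adj u v ∨ blue.Adj u v := by
    intro u v h
    rw [← hcol] at h
    exact h
  haveI : Fintype red.ConnectedComponent := Fintype.ofFinite _
  haveI : Fintype blue.ConnectedComponent := Fintype.ofFinite _
  set mr : V → red.ConnectedComponent := red.connectedComponentMk with hmr
  set mb : V → blue.ConnectedComponent := blue.connectedComponentMk with hmb
  set N : Finset red.ConnectedComponent → Finset blue.ConnectedComponent :=
    fun S => (univ.filter (fun v => mr v ∈ S)).image mb with hN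
  -- pick S maximizing |S| - |N S|
  obtain ⟨S, -, hS⟩ := Finset.exists_max_image (univ : Finset (Finset red.ConnectedComponent))
    (fun S => (S.card : ℤ) - ((N S).card : ℤ)) ⟨∅, mem_univ _⟩
  have hNempty : N ∅ = ∅ := by simp [hN]
  have h0 : (0 : ℤ) ≤ (S.card : ℤ) - ((N S).card : ℤ) := by
    have := hS ∅ (mem_univ _)
    simpa [hNempty] using this
  have hNS : (N S).card ≤ S.card := by exact_mod_cast sub_nonneg.mp h0
  set d : ℕ := S.card - (N S).card with hddef
  have hd : (N S).card + d = S.card := by omega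
  -- Hall's theorem setup
  set t : red.ConnectedComponent → Finset (blue.ConnectedComponent ⊕ Fin d) :=
    fun x => ((univ.filter (fun v => mr v = x)).image (fun v => Sum.inl (mb v))) ∪
      ((univ : Finset (Fin d)).image Sum.inr) with ht
  have hall : ∀ s : Finset red.ConnectedComponent, s.card ≤ (s.biUnion t).card := by
    intro s
    rcases s.eq_empty_or_nonempty with rfl | hs
    · simp
    · have hsub : (N s).image Sum.inl ∪
          ((univ : Finset (Fin d)).image (Sum.inr (α := blue.ConnectedComponent)))
          ⊆ s.biUnion t := by
        intro a ha
        rcases mem_union.mp ha with ha | ha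
        · obtain ⟨b, hb, rfl⟩ := mem_image.mp ha
          obtain ⟨v, hv, rfl⟩ := mem_image.mp hb
          have hv' : mr v ∈ s := (mem_filter.mp hv).2
          exact mem_biUnion.mpr ⟨mr v, hv',
            mem_union.mpr (Or.inl (mem_image.mpr ⟨v, by simp, rfl⟩))⟩
        · obtain ⟨i, -, rfl⟩ := mem_image.mp ha
          exact mem_biUnion.mpr ⟨hs.choose, hs.choose_spec,
            mem_union.mpr (Or.inr (mem_image.mpr ⟨i, mem_univ _, rfl⟩))⟩
      have hdisj : Disjoint ((N s).image Sum.inl)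
          (((univ : Finset (Fin d)).image (Sum.inr (α := blue.ConnectedComponent)))) := by
        simp [Finset.disjoint_left]
      have hcard : ((N s).image Sum.inl ∪
          ((univ : Finset (Fin d)).image (Sum.inr (α := blue.ConnectedComponent)))).card
          = (N s).card + d := by
        rw [Finset.card_union_of_disjoint hdisj,
          Finset.card_image_of_injective _ Sum.inl_injective,
          Finset.card_image_of_injective _ Sum.inr_injective, Finset.card_univ,
          Fintype.card_fin]
      have hmax := hS s (mem_univ _)
      have : s.card ≤ (N s).card + d := by omega
      calc s.card ≤ (N s).card + d := this
        _ = _ := hcard.symm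
        _ ≤ (s.biUnion t).card := Finset.card_le_card hsub
  obtain ⟨f, hfinj, hft⟩ := (Finset.all_card_le_biUnion_card_iff_exists_injective t).mp hall
  -- matching gives an independent set
  set M : Finset red.ConnectedComponent := univ.filter (fun x => (f x).isLeft) with hM
  have hrep : ∀ x ∈ M, ∃ v : V, mr v = x ∧ f x = Sum.inl (mb v) := by
    intro x hx
    have hfx := hft x
    rcases mem_union.mp hfx with h | h
    · obtain ⟨v, hv, hveq⟩ := mem_image.mp h
      exact ⟨v, (mem_filter.mp hv).2, hveq.symm⟩
    · obtain ⟨i, -, hieq⟩ := mem_image.mp h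
      exfalso
      have := (mem_filter.mp hx).2
      rw [← hieq] at this
      simp at this
  choose! g hg1 hg2 using hrep
  have hginj : Set.InjOn g (M : Set red.ConnectedComponent) := by
    intro x hx y hy hxy
    rw [← hg1 x (mem_coe.mp hx), ← hg1 y (mem_coe.mp hy), hxy]
  have hindep : ∀ u ∈ M.image g, ∀ v ∈ M.image g, u ≠ v → ¬ G.Adj u v := by
    intro u hu v hv huv hadj
    obtain ⟨x, hx, rfl⟩ := mem_image.mp hu
    obtain ⟨y, hy, rfl⟩ := mem_image.mp hv
    have hxy : x ≠ y := fun h => huv (by rw [h])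
    rcases hGadj _ _ hadj with h | h
    · apply hxy
      rw [← hg1 x hx, ← hg1 y hy]
      exact SimpleGraph.ConnectedComponent.connectedComponentMk_eq_of_adj h
    · apply hxy
      apply hfinj
      rw [hg2 x hx, hg2 y hy]
      exact congrArg Sum.inl (SimpleGraph.ConnectedComponent.connectedComponentMk_eq_of_adj h)
  have hMα : M.card ≤ α := by
    have hmem : (M.image g).card ∈ {n : ℕ | ∃ s : Finset V,
        s.card = n ∧ ∀ u ∈ s, ∀ v ∈ s, u ≠ v → ¬ G.Adj u v} :=
      ⟨M.image g, rfl, hindep⟩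
    have := hα.2 hmem
    rwa [Finset.card_image_of_injOn hginj] at this
  -- the non-matched components are few
  have hMc : (univ.filter (fun x => ¬ ((f x).isLeft = true))).card ≤ d := by
    have : (univ.filter (fun x => ¬ ((f x).isLeft = true))).card ≤
        (((univ : Finset (Fin d)).image (Sum.inr (α := blue.ConnectedComponent)))).card := by
      apply Finset.card_le_card_of_injOn f
      · intro x hx
        have hfx := hft x
        rcases mem_union.mp hfx with h | h
        · exfalso
          obtain ⟨v, -, hveq⟩ := mem_image.mp h
          have := (mem_filter.mp hx).2
          rw [← hveq] at this
          simp at this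
        · exact h
      · intro x _ y _ h
        exact hfinj h
    calc (univ.filter (fun x => ¬ ((f x).isLeft = true))).card ≤ _ := this
      _ ≤ d := by
        rw [Finset.card_image_of_injective _ Sum.inr_injective, Finset.card_univ,
          Fintype.card_fin]
  have huniv : (univ : Finset red.ConnectedComponent).card ≤ α + d := by
    have h2 : M.card + (univ.filter (fun x => ¬ ((f x).isLeft = true))).card
        = (univ : Finset red.ConnectedComponent).card := by
      simpa [hM] using Finset.card_filter_add_card_filter_not
        (s := (univ : Finset red.ConnectedComponent)) (p := fun x => (f x).isLeft = true)
    omega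
  -- representatives
  have hrrep : ∀ x : red.ConnectedComponent, ∃ v : V, mr v = x := fun x => Quot.exists_rep x
  have hbrep : ∀ b : blue.ConnectedComponent, ∃ v : V, mb v = b := fun b => Quot.exists_rep b
  choose gr hgr using hrrep
  choose gb hgb using hbrep
  refine ⟨((univ \ S).image (fun x => compSub G red hRG (gr x))) ∪
    ((N S).image (fun b => compSub G blue hBG (gb b))), ?_, ?_, ?_, ?_⟩
  · have h1 : (univ \ S).card = (univ : Finset red.ConnectedComponent).card - S.card :=
      Finset.card_sdiff_of_subset (Finset.subset_univ S)
    have h2 : S.card ≤ (univ : Finset red.ConnectedComponent).card := Finset.card_le_univ S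
    calc _ ≤ ((univ \ S).image (fun x => compSub G red hRG (gr x))).card +
        ((N S).image (fun b => compSub G blue hBG (gb b))).card := Finset.card_union_le _ _
      _ ≤ (univ \ S).card + (N S).card :=
        Nat.add_le_add (Finset.card_image_le) (Finset.card_image_le)
      _ ≤ α := by omega
  · intro H hH
    rcases mem_union.mp hH with h | h
    · obtain ⟨x, -, rfl⟩ := mem_image.mp h
      exact Or.inl (compSub_spanningCoe_le G red hRG (gr x))
    · obtain ⟨b, -, rfl⟩ := mem_image.mp h
      exact Or.inr (compSub_spanningCoe_le G blue hBG (gb b))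
  · intro H hH
    rcases mem_union.mp hH with h | h
    · obtain ⟨x, -, rfl⟩ := mem_image.mp h
      exact compSub_edist_le G red hRG (gr x) hred
    · obtain ⟨b, -, rfl⟩ := mem_image.mp h
      exact compSub_edist_le G blue hBG (gb b) hblue
  · intro v
    by_cases hv : mr v ∈ S
    · refine ⟨compSub G blue hBG (gb (mb v)), mem_union.mpr (Or.inr (mem_image.mpr
        ⟨mb v, ?_, rfl⟩)), ?_⟩
      · exact mem_image.mpr ⟨v, mem_filter.mpr ⟨mem_univ _, hv⟩, rfl⟩
      · show blue.Reachable (gb (mb v)) v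
        exact SimpleGraph.ConnectedComponent.exact (hgb (mb v))
    · refine ⟨compSub G red hRG (gr (mr v)), mem_union.mpr (Or.inl (mem_image.mpr
        ⟨mr v, mem_sdiff.mpr ⟨mem_univ _, hv⟩, rfl⟩)), ?_⟩
      show red.Reachable (gr (mr v)) v
      exact SimpleGraph.ConnectedComponent.exact (hgr (mr v))
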